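/- With T = [[1,1],[0,1]] and T' = [[1,0],[1,1]] in SL(2,ℤ), every matrix g ∈ SL(2,ℤ) with all entries nonnegative and g ≠ I can be written as g = T·h or g = T'·h for some matrix h ∈ SL(2,ℤ) with all entries nonnegative; consequently, the semigroup of nonnegative SL(2,ℤ)-matrices is freely generated by T and T'. -/

import Mathlib

def Tmat : Matrix.SpecialLinearGroup (Fin 2) ℤ := ⟨!![1, 1; 0, 1], by decide⟩

def Tmat' : Matrix.SpecialLinearGroup (Fin 2) ℤ := ⟨!![1, 0; 1, 1], by decide⟩

/-- The semigroup `S` of `SL(2,ℤ)`-matrices with nonnegative entries. -/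
def Snn : Set (Matrix.SpecialLinearGroup (Fin 2) ℤ) := {g | ∀ i j, 0 ≤ g.1 i j}

namespace Stmt13Aux

abbrev SL2 := Matrix.SpecialLinearGroup (Fin 2) ℤ

lemma det_eq (g : SL2) : g.1 0 0 * g.1 1 1 - g.1 0 1 * g.1 1 0 = 1 := by
  have h := g.2
  rw [Matrix.det_fin_two] at h
  linarith

lemma mul_entry (g h : SL2) (i j : Fin 2) :
    (g * h).1 i j = g.1 i 0 * h.1 0 j + g.1 i 1 * h.1 1 j := by
  simp [Matrix.SpecialLinearGroup.coe_mul, Matrix.mul_apply, Fin.sum_univ_two]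

lemma Tmat_entries : Tmat.1 0 0 = 1 ∧ Tmat.1 0 1 = 1 ∧ Tmat.1 1 0 = 0 ∧ Tmat.1 1 1 = 1 := by
  refine ⟨?_, ?_, ?_, ?_⟩ <;> simp [Tmat]

lemma Tmat'_entries : Tmat'.1 0 0 = 1 ∧ Tmat'.1 0 1 = 0 ∧ Tmat'.1 1 0 = 1 ∧ Tmat'.1 1 1 = 1 := by
  refine ⟨?_, ?_, ?_, ?_⟩ <;> simp [Tmat']

lemma T_mul (h : SL2) (j : Fin 2) :
    (Tmat * h).1 0 j = h.1 0 j + h.1 1 j ∧ (Tmat * h).1 1 j = h.1 1 j := by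
  obtain ⟨e1, e2, e3, e4⟩ := Tmat_entries
  constructor <;> rw [mul_entry] <;> simp only [e1, e2, e3, e4] <;> ring

lemma T'_mul (h : SL2) (j : Fin 2) :
    (Tmat' * h).1 0 j = h.1 0 j ∧ (Tmat' * h).1 1 j = h.1 0 j + h.1 1 j := by
  obtain ⟨e1, e2, e3, e4⟩ := Tmat'_entries
  constructor <;> rw [mul_entry] <;> simp only [e1, e2, e3, e4] <;> ring

lemma one_entry : (1 : SL2).1 0 0 = 1 ∧ (1 : SL2).1 0 1 = 0 ∧ (1 : SL2).1 1 0 = 0 ∧ (1 : SL2).1 1 1 = 1 := by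
  refine ⟨?_, ?_, ?_, ?_⟩ <;> simp [Matrix.SpecialLinearGroup.coe_one, Matrix.one_apply]

lemma eq_of_entries (g h : SL2) (h00 : g.1 0 0 = h.1 0 0) (h01 : g.1 0 1 = h.1 0 1)
    (h10 : g.1 1 0 = h.1 1 0) (h11 : g.1 1 1 = h.1 1 1) : g = h := by
  ext i j
  fin_cases i <;> fin_cases j <;> assumption

lemma one_mem : (1 : SL2) ∈ Snn := by
  intro i j
  fin_cases i <;> fin_cases j <;>
    simp [Snn, Matrix.SpecialLinearGroup.coe_one, Matrix.one_apply]

lemma mul_mem {g h : SL2} (hg : g ∈ Snn) (hh : h ∈ Snn) : g * h ∈ Snn := by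
  intro i j
  rw [mul_entry]
  have := hg i 0; have := hg i 1; have := hh 0 j; have := hh 1 j
  positivity

lemma Tmat_mem : Tmat ∈ Snn := by
  intro i j; fin_cases i <;> fin_cases j <;> simp [Snn, Tmat]

lemma Tmat'_mem : Tmat' ∈ Snn := by
  intro i j; fin_cases i <;> fin_cases j <;> simp [Snn, Tmat']

/-- sum of entries -/
def msum (g : SL2) : ℤ := g.1 0 0 + g.1 0 1 + g.1 1 0 + g.1 1 1

lemma msum_nonneg {g : SL2} (hg : g ∈ Snn) : 0 ≤ msum g := by
  have := hg 0 0; have := hg 0 1; have := hg 1 0; have := hg 1 1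
  unfold msum; linarith

lemma row_sum_pos {h : SL2} (hh : h ∈ Snn) : 1 ≤ h.1 1 0 + h.1 1 1 := by
  have d := det_eq h
  have h0 := hh 1 0; have h1 := hh 1 1
  have h2 := hh 0 0; have h3 := hh 0 1
  by_contra hc
  push_neg at hc
  have e0 : h.1 1 0 = 0 := by linarith
  have e1 : h.1 1 1 = 0 := by linarith
  rw [e0, e1] at d; linarith

lemma col_sum_pos {h : SL2} (hh : h ∈ Snn) : 1 ≤ h.1 0 0 + h.1 0 1 := by
  have d := det_eq h
  have h0 := hh 0 0; have h1 := hh 0 1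
  by_contra hc
  push_neg at hc
  have e0 : h.1 0 0 = 0 := by linarith
  have e1 : h.1 0 1 = 0 := by linarith
  rw [e0, e1] at d; linarith

lemma msum_lt_T {h : SL2} (hh : h ∈ Snn) : msum h < msum (Tmat * h) := by
  have a := (T_mul h 0).1; have b := (T_mul h 1).1
  have c := (T_mul h 0).2; have d := (T_mul h 1).2
  have := row_sum_pos hh
  unfold msum; rw [a, b, c, d]; linarith

lemma msum_lt_T' {h : SL2} (hh : h ∈ Snn) : msum h < msum (Tmat' * h) := by
  have a := (T'_mul h 0).1; have b := (T'_mul h 1).1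
  have c := (T'_mul h 0).2; have d := (T'_mul h 1).2
  have := col_sum_pos hh
  unfold msum; rw [a, b, c, d]; linarith

/-- Part 1: the decomposition step. -/
lemma step (g : SL2) (hg : g ∈ Snn) (hne : g ≠ 1) :
    ∃ h ∈ Snn, g = Tmat * h ∨ g = Tmat' * h := by
  set a := g.1 0 0 with ha
  set b := g.1 0 1 with hb
  set c := g.1 1 0 with hc
  set d := g.1 1 1 with hd
  have dg : a * d - b * c = 1 := det_eq g
  have na : 0 ≤ a := hg 0 0
  have nb : 0 ≤ b := hg 0 1
  have nc : 0 ≤ c := hg 1 0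
  have nd : 0 ≤ d := hg 1 1
  have key : (c ≤ a ∧ d ≤ b) ∨ (a ≤ c ∧ b ≤ d) := by
    rcases le_or_gt c a with hca | hca
    · rcases le_or_gt d b with hdb | hdb
      · exact Or.inl ⟨hca, hdb⟩
      · -- c ≤ a, b < d; show a ≤ c (i.e. a = c), giving the right case
        refine Or.inr ⟨?_, le_of_lt hdb⟩
        by_contra hac
        push_neg at hac
        -- c < a and b < d: forces g = 1
        have hb0 : b = 0 := by nlinarith
        have hc0 : c = 0 := by nlinarith
        have had : a * d = 1 := by rw [hb0, hc0] at dg; linarith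
        have ha1 : a = 1 := by nlinarith
        have hd1 : d = 1 := by nlinarith
        apply hne
        obtain ⟨o1, o2, o3, o4⟩ := one_entry
        exact eq_of_entries g 1 (by rw [o1, ← ha, ha1]) (by rw [o2, ← hb, hb0])
          (by rw [o3, ← hc, hc0]) (by rw [o4, ← hd, hd1])
    · rcases le_or_gt b d with hbd | hbd
      · exact Or.inr ⟨le_of_lt hca, hbd⟩
      · exfalso; nlinarith
  rcases key with ⟨h1, h2⟩ | ⟨h1, h2⟩
  · refine ⟨⟨!![a - c, b - d; c, d], ?_⟩, ?_, Or.inl ?_⟩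
    · rw [Matrix.det_fin_two_of]; ring_nf; linarith
    · intro i j
      fin_cases i <;> fin_cases j <;> simp <;> linarith
    · apply eq_of_entries
      · erw [(T_mul _ 0).1]; show a = _; simp
      · erw [(T_mul _ 1).1]; show b = _; simp
      · erw [(T_mul _ 0).2]; show c = _; simp
      · erw [(T_mul _ 1).2]; show d = _; simp
  · refine ⟨⟨!![a, b; c - a, d - b], ?_⟩, ?_, Or.inr ?_⟩
    · rw [Matrix.det_fin_two_of]; ring_nf; linarith
    · intro i j
      fin_cases i <;> fin_cases j <;> simp <;> linarith
    · apply eq_of_entries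
      · erw [(T'_mul _ 0).1]; show a = _; simp
      · erw [(T'_mul _ 1).1]; show b = _; simp
      · erw [(T'_mul _ 0).2]; show c = _; simp
      · erw [(T'_mul _ 1).2]; show d = _; simp

def wprod (w : List Bool) : SL2 := (w.map (fun x => if x then Tmat else Tmat')).prod

lemma wprod_nil : wprod [] = 1 := rfl

lemma wprod_cons (b : Bool) (t : List Bool) :
    wprod (b :: t) = (if b then Tmat else Tmat') * wprod t := by
  simp [wprod]

lemma wprod_mem (w : List Bool) : wprod w ∈ Snn := by
  induction w with
  | nil => exact one_mem
  | cons b t ih =>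
    rw [wprod_cons]
    cases b
    · exact mul_mem Tmat'_mem ih
    · exact mul_mem Tmat_mem ih

lemma T_mul_ne_one {h : SL2} (hh : h ∈ Snn) : Tmat * h ≠ 1 := by
  intro he
  have e1 : (Tmat * h).1 0 1 = 0 := by rw [he]; exact one_entry.2.1
  rw [(T_mul h 1).1] at e1
  have d := det_eq h
  have h0 := hh 0 1; have h1 := hh 1 1
  have : h.1 0 1 = 0 := by linarith
  have : h.1 1 1 = 0 := by linarith
  have e2 : (Tmat * h).1 1 1 = 1 := by rw [he]; exact one_entry.2.2.2
  rw [(T_mul h 1).2] at e2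
  linarith

lemma T'_mul_ne_one {h : SL2} (hh : h ∈ Snn) : Tmat' * h ≠ 1 := by
  intro he
  have e1 : (Tmat' * h).1 1 0 = 0 := by rw [he]; exact one_entry.2.2.1
  rw [(T'_mul h 0).2] at e1
  have h0 := hh 0 0; have h1 := hh 1 0
  have e2 : (Tmat' * h).1 0 0 = 1 := by rw [he]; exact one_entry.1
  rw [(T'_mul h 0).1] at e2
  linarith

lemma T_ne_T'_mul {h h' : SL2} (hh : h ∈ Snn) (hh' : h' ∈ Snn) :
    Tmat * h ≠ Tmat' * h' := by
  intro he
  set g := Tmat * h with hgdef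
  have r1 : g.1 0 0 = g.1 1 0 := by
    have a1 : g.1 0 0 = h.1 0 0 + h.1 1 0 := (T_mul h 0).1
    have a2 : g.1 1 0 = h.1 1 0 := (T_mul h 0).2
    have a3 : g.1 0 0 = h'.1 0 0 := by rw [he]; exact (T'_mul h' 0).1
    have a4 : g.1 1 0 = h'.1 0 0 + h'.1 1 0 := by rw [he]; exact (T'_mul h' 0).2
    have := hh 0 0; have := hh' 1 0
    linarith
  have r2 : g.1 0 1 = g.1 1 1 := by
    have a1 : g.1 0 1 = h.1 0 1 + h.1 1 1 := (T_mul h 1).1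
    have a2 : g.1 1 1 = h.1 1 1 := (T_mul h 1).2
    have a3 : g.1 0 1 = h'.1 0 1 := by rw [he]; exact (T'_mul h' 1).1
    have a4 : g.1 1 1 = h'.1 0 1 + h'.1 1 1 := by rw [he]; exact (T'_mul h' 1).2
    have := hh 0 1; have := hh' 1 1
    linarith
  have d := det_eq g
  rw [r1, r2] at d
  nlinarith

lemma exists_word : ∀ n : ℕ, ∀ g : SL2, g ∈ Snn → (msum g).toNat ≤ n →
    ∃ w : List Bool, g = wprod w := by
  intro n
  induction n with
  | zero =>
    intro g hg hm
    by_cases h1 : g = 1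
    · exact ⟨[], by rw [h1, wprod_nil]⟩
    · exfalso
      obtain ⟨h, hh, hcase⟩ := step g hg h1
      have hlt : msum h < msum g := by
        rcases hcase with rfl | rfl
        · exact msum_lt_T hh
        · exact msum_lt_T' hh
      have := msum_nonneg hh
      omega
  | succ n ih =>
    intro g hg hm
    by_cases h1 : g = 1
    · exact ⟨[], by rw [h1, wprod_nil]⟩
    · obtain ⟨h, hh, hcase⟩ := step g hg h1
      have hlt : msum h < msum g := by
        rcases hcase with rfl | rfl
        · exact msum_lt_T hh
        · exact msum_lt_T' hh
      have hn0 := msum_nonneg hh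
      obtain ⟨w, hw⟩ := ih h hh (by omega)
      rcases hcase with rfl | rfl
      · exact ⟨true :: w, by rw [wprod_cons, ← hw]; simp⟩
      · exact ⟨false :: w, by rw [wprod_cons, ← hw]; simp⟩

lemma uniq_word : ∀ n : ℕ, ∀ w1 w2 : List Bool,
    (msum (wprod w1)).toNat ≤ n → wprod w1 = wprod w2 → w1 = w2 := by
  intro n
  induction n with
  | zero =>
    intro w1 w2 hm he
    -- show both nil
    match w1, w2 with
    | [], [] => rfl
    | [], b :: t =>
      exfalso
      rw [wprod_nil, wprod_cons] at he
      cases b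
      · exact T'_mul_ne_one (wprod_mem t) he.symm
      · exact T_mul_ne_one (wprod_mem t) he.symm
    | b :: t, _ =>
      exfalso
      have hmem := wprod_mem t
      have hlt : msum (wprod t) < msum (wprod (b :: t)) := by
        rw [wprod_cons]; cases b
        · simpa using msum_lt_T' hmem
        · simpa using msum_lt_T hmem
      have := msum_nonneg hmem
      omega
  | succ n ih =>
    intro w1 w2 hm he
    match w1, w2 with
    | [], [] => rfl
    | [], b :: t =>
      exfalso
      rw [wprod_nil, wprod_cons] at he
      cases b
      · exact T'_mul_ne_one (wprod_mem t) he.symm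
      · exact T_mul_ne_one (wprod_mem t) he.symm
    | b :: t, [] =>
      exfalso
      rw [wprod_nil, wprod_cons] at he
      cases b
      · exact T'_mul_ne_one (wprod_mem t) he
      · exact T_mul_ne_one (wprod_mem t) he
    | b1 :: t1, b2 :: t2 =>
      rw [wprod_cons, wprod_cons] at he
      have hm1 := wprod_mem t1
      have hm2 := wprod_mem t2
      have hbb : b1 = b2 := by
        cases b1 <;> cases b2 <;> simp at he ⊢
        · exact T_ne_T'_mul hm2 hm1 he.symm
        · exact T_ne_T'_mul hm1 hm2 he
      subst hbb
      have ht : wprod t1 = wprod t2 := by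
        cases b1 <;> simp at he <;> exact he
      have hlt : msum (wprod t1) < msum (wprod (b1 :: t1)) := by
        rw [wprod_cons]; cases b1
        · simpa using msum_lt_T' hm1
        · simpa using msum_lt_T hm1
      have hn0 := msum_nonneg hm1
      exact List.cons_eq_cons.mpr ⟨rfl, ih t1 t2 (by omega) ht⟩

end Stmt13Aux

theorem stmt13 :
    (∀ g ∈ Snn, g ≠ 1 →
      ∃ h ∈ Snn, g = Tmat * h ∨ g = Tmat' * h) ∧
    (∀ g ∈ Snn, ∃! w : List Bool,
      g = (w.map (fun x => if x then Tmat else Tmat')).prod) := by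
  constructor
  · exact Stmt13Aux.step
  · intro g hg
    obtain ⟨w, hw⟩ := Stmt13Aux.exists_word (Stmt13Aux.msum g).toNat g hg le_rfl
    refine ⟨w, hw, ?_⟩
    intro w' hw'
    have : Stmt13Aux.wprod w' = Stmt13Aux.wprod w := by
      rw [← hw]; exact hw'.symm
    exact Stmt13Aux.uniq_word (Stmt13Aux.msum (Stmt13Aux.wprod w')).toNat w' w le_rfl this
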